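/- Let Γ satisfy the standard cone conditions. Then κ_Γ := max{k : (0,…,0,1,…,1) ∈ Γ with k zeros} equals the maximum number of negative entries that a vector in Γ can have, i.e., κ_Γ = max{k : (−α₁,…,−α_k, α_{k+1},…,α_n) ∈ Γ for some α₁,…,α_n > 0}. -/

import Mathlib

open Finset

/-- κ_Γ = max{k : (0,…,0 (k zeros),1,…,1) ∈ Γ} equals the maximum number of
negative entries a vector in Γ can have. -/
theorem stmt8 (n : ℕ) (hn : 3 ≤ n) (Γ : Set (Fin n → ℝ))
    (hopen : IsOpen Γ) (hconv : Convex ℝ Γ)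
    (hsymm : ∀ (σ : Equiv.Perm (Fin n)), ∀ x ∈ Γ, (x ∘ σ) ∈ Γ)
    (hcone : ∀ t : ℝ, 0 < t → ∀ x ∈ Γ, t • x ∈ Γ)
    (hsub1 : {x : Fin n → ℝ | ∀ i, 0 < x i} ⊆ Γ)
    (hsub2 : Γ ⊆ {x : Fin n → ℝ | 0 < ∑ i, x i}) :
    sSup {k : ℕ | (fun i : Fin n => if (i : ℕ) < k then (0 : ℝ) else 1) ∈ Γ} =
      sSup {k : ℕ | ∃ α : Fin n → ℝ, (∀ i, 0 < α i) ∧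
        (fun i : Fin n => if (i : ℕ) < k then -α i else α i) ∈ Γ} := by
  have hset : {k : ℕ | (fun i : Fin n => if (i : ℕ) < k then (0 : ℝ) else 1) ∈ Γ} =
      {k : ℕ | ∃ α : Fin n → ℝ, (∀ i, 0 < α i) ∧
        (fun i : Fin n => if (i : ℕ) < k then -α i else α i) ∈ Γ} := by
    ext k
    constructor
    · intro hk
      simp only [Set.mem_setOf_eq] at hk ⊢
      rcases Metric.isOpen_iff.mp hopen _ hk with ⟨ε, hε, hball⟩
      set δ := min (ε / 2) (1 / 2) with hδdef
      have hδpos : 0 < δ := lt_min (by linarith) (by norm_num)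
      have hδε : δ < ε := lt_of_le_of_lt (min_le_left _ _) (by linarith)
      have hδ1 : δ < 1 := lt_of_le_of_lt (min_le_right _ _) (by norm_num)
      refine ⟨fun i => if (i : ℕ) < k then δ else 1 - δ, ?_, ?_⟩
      · intro i; dsimp only; split_ifs
        · exact hδpos
        · linarith
      · apply hball
        rw [Metric.mem_ball, dist_pi_lt_iff hε]
        intro i
        dsimp only
        rw [Real.dist_eq]
        split_ifs
        · rw [sub_zero, abs_neg, abs_of_pos hδpos]; exact hδε
        · rw [show (1:ℝ) - δ - 1 = -δ by ring, abs_neg, abs_of_pos hδpos]; exact hδε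
    · rintro ⟨α, hα, hmem⟩
      simp only [Set.mem_setOf_eq] at hmem ⊢
      set c : ℝ := 1 + ∑ i, α i with hcdef
      have hsum : ∀ i, α i ≤ ∑ j, α j := fun i =>
        Finset.single_le_sum (fun j _ => (hα j).le) (Finset.mem_univ i)
      have hcα : ∀ i, α i < c := fun i => by have := hsum i; simp [hcdef]; linarith
      have hcpos : 0 < c := lt_of_lt_of_le (hα ⟨0, by omega⟩) (hcα ⟨0, by omega⟩).le
      have hz : (fun i : Fin n => if (i : ℕ) < k then α i else c - α i) ∈ Γ := by
        apply hsub1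
        intro i
        dsimp only [Set.mem_setOf_eq]
        split_ifs
        · exact hα i
        · have := hcα i; linarith
      have hmid := hconv hmem hz (by norm_num : (0:ℝ) ≤ 1/2) (by norm_num : (0:ℝ) ≤ 1/2)
        (by norm_num)
      have hfinal := hcone (2 / c) (by positivity) _ hmid
      have heq : (2 / c) • ((1/2 : ℝ) • (fun i : Fin n => if (i : ℕ) < k then -α i else α i)
          + (1/2 : ℝ) • (fun i : Fin n => if (i : ℕ) < k then α i else c - α i))
          = (fun i : Fin n => if (i : ℕ) < k then (0 : ℝ) else 1) := by
        funext i
        simp only [Pi.smul_apply, Pi.add_apply, smul_eq_mul]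
        split_ifs
        · ring
        · field_simp; ring
      rwa [heq] at hfinal
  rw [hset]
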